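/- Let P₀ be a symmetric positive definite n×n real matrix and R a symmetric positive semidefinite m×m real matrix, and let H₀ be an m×n real matrix such that H₀ P₀ H₀ᵀ + R is invertible. Define, for H in a neighborhood of H₀, f(H) = ‖P₀ − P₀ Hᵀ (H P₀ Hᵀ + R)⁻¹ H P₀‖_F², and write Σ(H) = (H P₀ Hᵀ + R)⁻¹ and P_p(H) = P₀ − P₀ Hᵀ Σ(H) H P₀. Then f is differentiable at H₀ and its gradient with respect to the Frobenius inner product ⟨A,B⟩ = tr(AᵀB) on m×n matrices is ∇f(H₀) = −4 [P_p(H₀)² P₀ H₀ᵀ Σ(H₀)]ᵀ; equivalently, for every m×n matrix K, the Fréchet derivative satisfies Df(H₀)[K] = −4 tr(P_p(H₀)² P₀ H₀ᵀ Σ(H₀) K). -/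

import Mathlib

open Matrix

-- Equip matrices with the Frobenius norm (for which the gradient is computed).
attribute [local instance]
  Matrix.frobeniusSeminormedAddCommGroup Matrix.frobeniusNormedAddCommGroup
  Matrix.frobeniusIsBoundedSMul Matrix.frobeniusNormedSpace

section FrobAux
attribute [local instance] Matrix.frobeniusNormedRing Matrix.frobeniusNormedAlgebra

theorem matmul_isBBM (a b c : ℕ) :
    IsBoundedBilinearMap ℝ
      (fun p : Matrix (Fin a) (Fin b) ℝ × Matrix (Fin b) (Fin c) ℝ => p.1 * p.2) where
  add_left := by intros; dsimp only; rw [Matrix.add_mul]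
  smul_left := by intros; dsimp only; rw [Matrix.smul_mul]
  add_right := by intros; dsimp only; rw [Matrix.mul_add]
  smul_right := by intros; dsimp only; rw [Matrix.mul_smul]
  bound := ⟨1, one_pos, fun x y => by simpa using Matrix.frobenius_norm_mul x y⟩

noncomputable def mkCLM {E F : Type*} [NormedAddCommGroup E] [NormedSpace ℝ E]
    [FiniteDimensional ℝ E] [NormedAddCommGroup F] [NormedSpace ℝ F] (f : E → F)
    (h1 : ∀ x y, f (x + y) = f x + f y) (h2 : ∀ (c : ℝ) (x), f (c • x) = c • f x) :
    E →L[ℝ] F :=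
  LinearMap.toContinuousLinearMap ⟨⟨f, h1⟩, h2⟩

@[simp] theorem mkCLM_apply {E F : Type*} [NormedAddCommGroup E] [NormedSpace ℝ E]
    [FiniteDimensional ℝ E] [NormedAddCommGroup F] [NormedSpace ℝ F] (f : E → F)
    (h1 h2) (x : E) : mkCLM f h1 h2 x = f x := rfl

theorem hasFDerivAt_matmul {E : Type*} [NormedAddCommGroup E] [NormedSpace ℝ E]
    {a b c : ℕ} {f : E → Matrix (Fin a) (Fin b) ℝ} {g : E → Matrix (Fin b) (Fin c) ℝ}
    {f' : E →L[ℝ] Matrix (Fin a) (Fin b) ℝ} {g' : E →L[ℝ] Matrix (Fin b) (Fin c) ℝ} {x : E}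
    (hf : HasFDerivAt f f' x) (hg : HasFDerivAt g g' x) :
    HasFDerivAt (fun y => f y * g y)
      (((matmul_isBBM a b c).deriv (f x, g x)).comp (f'.prod g')) x :=
  by have := ((matmul_isBBM a b c).hasFDerivAt (f x, g x)).comp x (hf.prodMk hg); exact this

theorem main_chain {m n : ℕ}
    (P₀ : Matrix (Fin n) (Fin n) ℝ) (R : Matrix (Fin m) (Fin m) ℝ)
    (H₀ : Matrix (Fin m) (Fin n) ℝ)
    (hinv : IsUnit (H₀ * P₀ * H₀ᵀ + R))
    (Sig : Matrix (Fin m) (Fin m) ℝ) (hSig : Sig = (H₀ * P₀ * H₀ᵀ + R)⁻¹)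
    (Pp : Matrix (Fin n) (Fin n) ℝ) (hPp : Pp = P₀ - P₀ * H₀ᵀ * Sig * H₀ * P₀) :
    ∃ L : Matrix (Fin m) (Fin n) ℝ →L[ℝ] ℝ,
      HasFDerivAt (fun H : Matrix (Fin m) (Fin n) ℝ =>
        Matrix.trace ((P₀ - P₀ * Hᵀ * (H * P₀ * Hᵀ + R)⁻¹ * H * P₀)ᵀ *
          (P₀ - P₀ * Hᵀ * (H * P₀ * Hᵀ + R)⁻¹ * H * P₀))) L H₀ ∧
      ∀ K, L K = Matrix.trace
        ((-(((P₀ * Kᵀ * Sig + P₀ * H₀ᵀ * (-(Sig * (K * P₀ * H₀ᵀ + H₀ * P₀ * Kᵀ) * Sig))) * H₀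
             + P₀ * H₀ᵀ * Sig * K) * P₀))ᵀ * Pp
         + Ppᵀ * (-(((P₀ * Kᵀ * Sig + P₀ * H₀ᵀ * (-(Sig * (K * P₀ * H₀ᵀ + H₀ * P₀ * Kᵀ) * Sig))) * H₀
             + P₀ * H₀ᵀ * Sig * K) * P₀))) := by
  have hSR : Sig = Ring.inverse (H₀ * P₀ * H₀ᵀ + R) := by
    rw [hSig, Matrix.nonsing_inv_eq_ringInverse]
  have hSu : ((hinv.unit⁻¹ : (Matrix (Fin m) (Fin m) ℝ)ˣ) : Matrix (Fin m) (Fin m) ℝ) = Sig := by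
    rw [hSR]; conv_rhs => rw [← hinv.unit_spec, Ring.inverse_unit]
  -- CLMs
  let C1 : Matrix (Fin m) (Fin n) ℝ →L[ℝ] Matrix (Fin m) (Fin n) ℝ :=
    mkCLM (fun H => H * P₀) (fun x y => Matrix.add_mul _ _ _) (fun c x => Matrix.smul_mul _ _ _)
  let CT : Matrix (Fin m) (Fin n) ℝ →L[ℝ] Matrix (Fin n) (Fin m) ℝ :=
    mkCLM (fun H => Hᵀ) (fun x y => Matrix.transpose_add _ _) (fun c x => Matrix.transpose_smul _ _)
  let C2 : Matrix (Fin m) (Fin n) ℝ →L[ℝ] Matrix (Fin n) (Fin m) ℝ :=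
    mkCLM (fun H => P₀ * Hᵀ)
      (fun x y => by rw [Matrix.transpose_add, Matrix.mul_add])
      (fun c x => by rw [Matrix.transpose_smul, Matrix.mul_smul])
  let CTn : Matrix (Fin n) (Fin n) ℝ →L[ℝ] Matrix (Fin n) (Fin n) ℝ :=
    mkCLM (fun X => Xᵀ) (fun x y => Matrix.transpose_add _ _) (fun c x => Matrix.transpose_smul _ _)
  let Ctr : Matrix (Fin n) (Fin n) ℝ →L[ℝ] ℝ :=
    mkCLM Matrix.trace (fun x y => Matrix.trace_add _ _) (fun c x => Matrix.trace_smul _ _)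
  have h1 : HasFDerivAt (fun H : Matrix (Fin m) (Fin n) ℝ => H * P₀) C1 H₀ := C1.hasFDerivAt
  have hT : HasFDerivAt (fun H : Matrix (Fin m) (Fin n) ℝ => Hᵀ) CT H₀ := CT.hasFDerivAt
  have h2 := (hasFDerivAt_matmul h1 hT).add_const R
  have hu := hasFDerivAt_ringInverse (𝕜 := ℝ) hinv.unit
  rw [hinv.unit_spec] at hu
  have h3 := hu.comp H₀ h2
  have h4 : HasFDerivAt (fun H : Matrix (Fin m) (Fin n) ℝ => P₀ * Hᵀ) C2 H₀ := C2.hasFDerivAt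
  have h5 := hasFDerivAt_matmul h4 h3
  have h6 := hasFDerivAt_matmul h5 (hasFDerivAt_id H₀)
  have h7 := hasFDerivAt_matmul h6 (hasFDerivAt_const P₀ H₀)
  have h8 := h7.const_sub P₀
  have h9 := CTn.hasFDerivAt.comp H₀ h8
  have h10 := hasFDerivAt_matmul h9 h8
  have h11 := Ctr.hasFDerivAt.comp H₀ h10
  have key : ∃ L : Matrix (Fin m) (Fin n) ℝ →L[ℝ] ℝ,
      HasFDerivAt (fun H : Matrix (Fin m) (Fin n) ℝ =>
        Matrix.trace ((P₀ - P₀ * Hᵀ * Ring.inverse (H * P₀ * Hᵀ + R) * H * P₀)ᵀ *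
          (P₀ - P₀ * Hᵀ * Ring.inverse (H * P₀ * Hᵀ + R) * H * P₀))) L H₀ ∧
      ∀ K, L K = Matrix.trace
        ((-(((P₀ * Kᵀ * Sig + P₀ * H₀ᵀ * (-(Sig * (K * P₀ * H₀ᵀ + H₀ * P₀ * Kᵀ) * Sig))) * H₀
             + P₀ * H₀ᵀ * Sig * K) * P₀))ᵀ * Pp
         + Ppᵀ * (-(((P₀ * Kᵀ * Sig + P₀ * H₀ᵀ * (-(Sig * (K * P₀ * H₀ᵀ + H₀ * P₀ * Kᵀ) * Sig))) * H₀
             + P₀ * H₀ᵀ * Sig * K) * P₀))) := by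
    refine ⟨_, h11, fun K => ?_⟩
    set_option maxRecDepth 100000 in
    change Matrix.trace
      ((P₀ - P₀ * H₀ᵀ * Ring.inverse (H₀ * P₀ * H₀ᵀ + R) * H₀ * P₀)ᵀ *
          -(P₀ * H₀ᵀ * Ring.inverse (H₀ * P₀ * H₀ᵀ + R) * H₀ * 0 +
            (P₀ * H₀ᵀ * Ring.inverse (H₀ * P₀ * H₀ᵀ + R) * K +
              (P₀ * H₀ᵀ * -(((hinv.unit⁻¹ : (Matrix (Fin m) (Fin m) ℝ)ˣ) : Matrix (Fin m) (Fin m) ℝ) *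
                  (H₀ * P₀ * Kᵀ + K * P₀ * H₀ᵀ) *
                  ((hinv.unit⁻¹ : (Matrix (Fin m) (Fin m) ℝ)ˣ) : Matrix (Fin m) (Fin m) ℝ)) +
                P₀ * Kᵀ * Ring.inverse (H₀ * P₀ * H₀ᵀ + R)) * H₀) * P₀) +
        (-(P₀ * H₀ᵀ * Ring.inverse (H₀ * P₀ * H₀ᵀ + R) * H₀ * 0 +
            (P₀ * H₀ᵀ * Ring.inverse (H₀ * P₀ * H₀ᵀ + R) * K +
              (P₀ * H₀ᵀ * -(((hinv.unit⁻¹ : (Matrix (Fin m) (Fin m) ℝ)ˣ) : Matrix (Fin m) (Fin m) ℝ) *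
                  (H₀ * P₀ * Kᵀ + K * P₀ * H₀ᵀ) *
                  ((hinv.unit⁻¹ : (Matrix (Fin m) (Fin m) ℝ)ˣ) : Matrix (Fin m) (Fin m) ℝ)) +
                P₀ * Kᵀ * Ring.inverse (H₀ * P₀ * H₀ᵀ + R)) * H₀) * P₀))ᵀ *
          (P₀ - P₀ * H₀ᵀ * Ring.inverse (H₀ * P₀ * H₀ᵀ + R) * H₀ * P₀)) = _
    simp only [ContinuousLinearMap.comp_apply, ContinuousLinearMap.prod_apply,
      IsBoundedBilinearMap.deriv_apply, mkCLM_apply, ContinuousLinearMap.coe_id',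
      id_eq, ContinuousLinearMap.neg_apply, ContinuousLinearMap.zero_apply,
      ContinuousLinearMap.mulLeftRight_apply, ContinuousLinearMap.add_apply,
      Matrix.mul_zero, add_zero, hSu, Function.comp, C1, C2, CT, CTn, Ctr]
    rw [← hSR, ← hPp]
    simp only [zero_add, Matrix.add_mul, Matrix.mul_add, Matrix.neg_mul, Matrix.mul_neg,
      Matrix.transpose_add, Matrix.transpose_neg, Matrix.transpose_mul,
      Matrix.transpose_transpose, Matrix.trace_add, Matrix.trace_neg, Matrix.mul_assoc,
      neg_add_rev, neg_neg, Matrix.trace_sub, Matrix.sub_mul, Matrix.mul_sub]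
    abel
  obtain ⟨L, hd, hLK⟩ := key
  refine ⟨L, ?_, hLK⟩
  simp only [Matrix.nonsing_inv_eq_ringInverse]
  exact hd

end FrobAux


theorem trace_algebra {m n : ℕ} (P₀ Pp : Matrix (Fin n) (Fin n) ℝ)
    (Sig : Matrix (Fin m) (Fin m) ℝ) (H₀ K : Matrix (Fin m) (Fin n) ℝ)
    (hP : P₀ᵀ = P₀) (hS : Sigᵀ = Sig) (hPpT : Ppᵀ = Pp)
    (hid : P₀ * H₀ᵀ * Sig * H₀ * P₀ = P₀ - Pp) :
    Matrix.trace
        ((-(((P₀ * Kᵀ * Sig + P₀ * H₀ᵀ * (-(Sig * (K * P₀ * H₀ᵀ + H₀ * P₀ * Kᵀ) * Sig))) * H₀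
             + P₀ * H₀ᵀ * Sig * K) * P₀))ᵀ * Pp
         + Ppᵀ * (-(((P₀ * Kᵀ * Sig + P₀ * H₀ᵀ * (-(Sig * (K * P₀ * H₀ᵀ + H₀ * P₀ * Kᵀ) * Sig))) * H₀
             + P₀ * H₀ᵀ * Sig * K) * P₀)))
      = -4 * Matrix.trace (Pp * Pp * P₀ * H₀ᵀ * Sig * K) := by
  have E1 : Matrix.trace (Pp*P₀*Kᵀ*Sig*H₀*P₀) = Matrix.trace (P₀*Pp*P₀*H₀ᵀ*Sig*K) := by
    rw [← Matrix.trace_transpose]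
    simp only [Matrix.transpose_mul, Matrix.transpose_transpose, hP, hS, hPpT, Matrix.mul_assoc]
    rw [Matrix.trace_mul_comm]; simp only [Matrix.mul_assoc]
    rw [Matrix.trace_mul_comm]; simp only [Matrix.mul_assoc]
    rw [Matrix.trace_mul_comm]; simp only [Matrix.mul_assoc]
    rw [Matrix.trace_mul_comm]; simp only [Matrix.mul_assoc]
  have E3 : Matrix.trace (Pp*P₀*H₀ᵀ*Sig*K*P₀) = Matrix.trace (P₀*Pp*P₀*H₀ᵀ*Sig*K) := by
    simp only [Matrix.mul_assoc]
    rw [Matrix.trace_mul_comm]; simp only [Matrix.mul_assoc]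
    rw [Matrix.trace_mul_comm]; simp only [Matrix.mul_assoc]
    rw [Matrix.trace_mul_comm]; simp only [Matrix.mul_assoc]
    rw [Matrix.trace_mul_comm]; simp only [Matrix.mul_assoc]
    rw [Matrix.trace_mul_comm]; simp only [Matrix.mul_assoc]
  have E2a : Matrix.trace (Pp*P₀*H₀ᵀ*Sig*K*P₀*H₀ᵀ*Sig*H₀*P₀)
      = Matrix.trace (P₀*Pp*P₀*H₀ᵀ*Sig*K) - Matrix.trace (Pp*Pp*P₀*H₀ᵀ*Sig*K) := by
    rw [show Pp*P₀*H₀ᵀ*Sig*K*P₀*H₀ᵀ*Sig*H₀*P₀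
        = (Pp*P₀*H₀ᵀ*Sig*K)*(P₀*H₀ᵀ*Sig*H₀*P₀) from by simp only [Matrix.mul_assoc],
      Matrix.trace_mul_comm, hid, Matrix.sub_mul, Matrix.trace_sub]
    simp only [Matrix.mul_assoc]
  have E2b : Matrix.trace (Pp*P₀*H₀ᵀ*Sig*H₀*P₀*Kᵀ*Sig*H₀*P₀)
      = Matrix.trace (P₀*Pp*P₀*H₀ᵀ*Sig*K) - Matrix.trace (Pp*Pp*P₀*H₀ᵀ*Sig*K) := by
    rw [← Matrix.trace_transpose]
    simp only [Matrix.transpose_mul, Matrix.transpose_transpose, hP, hS, hPpT, Matrix.mul_assoc]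
    rw [Matrix.trace_mul_comm]; simp only [Matrix.mul_assoc]
    rw [Matrix.trace_mul_comm]; simp only [Matrix.mul_assoc]
    rw [Matrix.trace_mul_comm]; simp only [Matrix.mul_assoc]
    rw [Matrix.trace_mul_comm]; simp only [Matrix.mul_assoc]
    rw [show P₀*(H₀ᵀ*(Sig*(H₀*(P₀*(Pp*(P₀*(H₀ᵀ*(Sig*K))))))))
        = (P₀*H₀ᵀ*Sig*H₀*P₀)*(Pp*(P₀*(H₀ᵀ*(Sig*K)))) from by simp only [Matrix.mul_assoc],
      hid, Matrix.sub_mul, Matrix.trace_sub]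
  have hexp : Matrix.trace (Pp * ((((P₀ * Kᵀ * Sig + P₀ * H₀ᵀ * (-(Sig * (K * P₀ * H₀ᵀ + H₀ * P₀ * Kᵀ) * Sig))) * H₀
             + P₀ * H₀ᵀ * Sig * K) * P₀)))
      = Matrix.trace (Pp*P₀*Kᵀ*Sig*H₀*P₀) - Matrix.trace (Pp*P₀*H₀ᵀ*Sig*K*P₀*H₀ᵀ*Sig*H₀*P₀)
        - Matrix.trace (Pp*P₀*H₀ᵀ*Sig*H₀*P₀*Kᵀ*Sig*H₀*P₀) + Matrix.trace (Pp*P₀*H₀ᵀ*Sig*K*P₀) := by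
    simp only [Matrix.mul_add, Matrix.add_mul, Matrix.mul_neg, Matrix.neg_mul,
      Matrix.trace_add, Matrix.trace_neg, Matrix.trace_sub, Matrix.mul_assoc]
    abel
  have hsym : Matrix.trace
        ((-(((P₀ * Kᵀ * Sig + P₀ * H₀ᵀ * (-(Sig * (K * P₀ * H₀ᵀ + H₀ * P₀ * Kᵀ) * Sig))) * H₀
             + P₀ * H₀ᵀ * Sig * K) * P₀))ᵀ * Pp)
      = Matrix.trace (Ppᵀ * (-(((P₀ * Kᵀ * Sig + P₀ * H₀ᵀ * (-(Sig * (K * P₀ * H₀ᵀ + H₀ * P₀ * Kᵀ) * Sig))) * H₀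
             + P₀ * H₀ᵀ * Sig * K) * P₀))) := by
    rw [← Matrix.trace_transpose, Matrix.transpose_mul, Matrix.transpose_transpose]
  rw [Matrix.trace_add, hsym, hPpT]
  rw [Matrix.mul_neg, Matrix.trace_neg, hexp, E1, E2a, E2b, E3]
  ring


/-- Gradient of the cost `f(H) = ‖P_p(H)‖_F² = tr(P_p(H)ᵀ P_p(H))` (Proposition 1): `f` is
differentiable at `H₀`, and w.r.t. the Frobenius inner product `⟨A,B⟩ = tr(AᵀB)` its gradient is
`∇f(H₀) = −4 [P_p(H₀)² P₀ H₀ᵀ Σ(H₀)]ᵀ`; equivalently the Fréchet derivative satisfies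
`Df(H₀)[K] = −4 tr(P_p(H₀)² P₀ H₀ᵀ Σ(H₀) K)`, where `Σ(H) = (H P₀ Hᵀ + R)⁻¹` and
`P_p(H) = P₀ − P₀ Hᵀ Σ(H) H P₀`. -/
theorem stmt_10 {m n : ℕ}
    (P₀ : Matrix (Fin n) (Fin n) ℝ) (R : Matrix (Fin m) (Fin m) ℝ)
    (H₀ : Matrix (Fin m) (Fin n) ℝ)
    (hP₀ : P₀.PosDef) (hR : R.PosSemidef) (hinv : IsUnit (H₀ * P₀ * H₀ᵀ + R))
    (f : Matrix (Fin m) (Fin n) ℝ → ℝ)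
    (hf : f = fun H =>
      Matrix.trace ((P₀ - P₀ * Hᵀ * (H * P₀ * Hᵀ + R)⁻¹ * H * P₀)ᵀ *
        (P₀ - P₀ * Hᵀ * (H * P₀ * Hᵀ + R)⁻¹ * H * P₀)))
    (Sig : Matrix (Fin m) (Fin m) ℝ) (hSig : Sig = (H₀ * P₀ * H₀ᵀ + R)⁻¹)
    (Pp : Matrix (Fin n) (Fin n) ℝ) (hPp : Pp = P₀ - P₀ * H₀ᵀ * Sig * H₀ * P₀)
    (grad : Matrix (Fin m) (Fin n) ℝ)
    (hgrad : grad = (-4 : ℝ) • (Pp * Pp * P₀ * H₀ᵀ * Sig)ᵀ) :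
    ∃ L : Matrix (Fin m) (Fin n) ℝ →L[ℝ] ℝ,
      HasFDerivAt f L H₀ ∧
      (∀ K : Matrix (Fin m) (Fin n) ℝ, L K = Matrix.trace (gradᵀ * K)) ∧
      (∀ K : Matrix (Fin m) (Fin n) ℝ,
        L K = -4 * Matrix.trace (Pp * Pp * P₀ * H₀ᵀ * Sig * K)) := by
  have hP : P₀ᵀ = P₀ := by
    simpa [Matrix.conjTranspose_eq_transpose_of_trivial] using hP₀.1.eq
  have hRs : Rᵀ = R := by
    simpa [Matrix.conjTranspose_eq_transpose_of_trivial] using hR.1.eq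
  have hA : (H₀ * P₀ * H₀ᵀ + R)ᵀ = H₀ * P₀ * H₀ᵀ + R := by
    simp [Matrix.transpose_add, Matrix.transpose_mul, hP, hRs, Matrix.mul_assoc]
  have hS : Sigᵀ = Sig := by
    rw [hSig, Matrix.transpose_nonsing_inv, hA]
  have hPpT : Ppᵀ = Pp := by
    rw [hPp]
    simp [Matrix.transpose_sub, Matrix.transpose_mul, hP, hS, Matrix.mul_assoc]
  have hid : P₀ * H₀ᵀ * Sig * H₀ * P₀ = P₀ - Pp := by
    rw [hPp]; exact (sub_sub_cancel _ _).symm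
  obtain ⟨L, hd, hLK⟩ := main_chain P₀ R H₀ hinv Sig hSig Pp hPp
  have key : ∀ K, L K = -4 * Matrix.trace (Pp * Pp * P₀ * H₀ᵀ * Sig * K) := fun K =>
    (hLK K).trans (trace_algebra P₀ Pp Sig H₀ K hP hS hPpT hid)
  refine ⟨L, by rw [hf]; exact hd, fun K => ?_, key⟩
  rw [key K, hgrad]
  simp [Matrix.transpose_smul, Matrix.smul_mul, Matrix.trace_smul, smul_eq_mul,
    Matrix.transpose_transpose]
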